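/- Let A, B ⊆ R² be closed convex cones and T_DR the Douglas–Rachford operator. If Fix T_DR = {0}, then for every n ∈ N, T_DR^n maps R² \ Ker T_DR into R² \ Fix T_DR; i.e., starting from any x₀ with T_DR(x₀) ≠ 0, the method never reaches a fixed point in finitely many steps. -/

import Mathlib

open RealInnerProductSpace

section Aux

variable {F : Type*} [NormedAddCommGroup F] [InnerProductSpace ℝ F]

/-- variational inequality for a minimizing projection -/
lemma aux_var_ineq {C : Set F} (hC : Convex ℝ C) {P : F → F}
    (hP : ∀ x, P x ∈ C ∧ ∀ w ∈ C, ‖x - P x‖ ≤ ‖x - w‖) (x : F) :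
    ∀ w ∈ C, ⟪x - P x, w - P x⟫ ≤ 0 := by
  haveI : Nonempty C := ⟨⟨P x, (hP x).1⟩⟩
  have h1 : ‖x - P x‖ = ⨅ w : C, ‖x - w‖ :=
    le_antisymm (le_ciInf fun w => (hP x).2 w w.2)
      (ciInf_le (f := fun w : C => ‖x - (w : F)‖) ⟨0, by rintro _ ⟨w, rfl⟩; positivity⟩ ⟨P x, (hP x).1⟩)
  exact (norm_eq_iInf_iff_real_inner_le_zero hC (hP x).1).mp h1

/-- firm nonexpansiveness of projection -/
lemma aux_firm {C : Set F} (hC : Convex ℝ C) {P : F → F}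
    (hP : ∀ x, P x ∈ C ∧ ∀ w ∈ C, ‖x - P x‖ ≤ ‖x - w‖) (x y : F) :
    ‖P x - P y‖ ^ 2 ≤ ⟪P x - P y, x - y⟫ := by
  have hx' := aux_var_ineq hC hP x (P y) (hP y).1
  have hy' := aux_var_ineq hC hP y (P x) (hP x).1
  have e : (x - y) = (x - P x) - (y - P y) + (P x - P y) := by abel
  rw [e, inner_add_right, inner_sub_right, real_inner_self_eq_norm_sq]
  have c1 : ⟪P x - P y, x - P x⟫ = -⟪x - P x, P y - P x⟫ := by
    rw [real_inner_comm, show P x - P y = -(P y - P x) by abel, inner_neg_right]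
  have c2 : ⟪P x - P y, y - P y⟫ = ⟪y - P y, P x - P y⟫ := real_inner_comm _ _
  linarith [hx', hy', c1.le, c1.ge, c2.le]

/-- uniqueness of minimizing projection -/
lemma aux_uniq {C : Set F} (hC : Convex ℝ C) {P : F → F}
    (hP : ∀ x, P x ∈ C ∧ ∀ w ∈ C, ‖x - P x‖ ≤ ‖x - w‖) (x q : F) (hq : q ∈ C)
    (hqmin : ∀ w ∈ C, ⟪x - q, w - q⟫ ≤ 0) : P x = q := by
  have h1 : ⟪x - P x, q - P x⟫ ≤ 0 := aux_var_ineq hC hP x q hq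
  have h2 : ⟪x - q, P x - q⟫ ≤ 0 := hqmin (P x) (hP x).1
  have key : ⟪q - P x, q - P x⟫ ≤ 0 := by
    have e : q - P x = (x - P x) - (x - q) := by abel
    have e3 : ⟪x - q, q - P x⟫ = -⟪x - q, P x - q⟫ := by
      rw [← inner_neg_right]; congr 1; abel
    calc ⟪q - P x, q - P x⟫ = ⟪x - P x, q - P x⟫ - ⟪x - q, q - P x⟫ := by
          rw [e, inner_sub_left]
      _ ≤ 0 := by rw [e3]; linarith
  have := real_inner_self_nonpos.mp key
  rw [sub_eq_zero] at this
  exact this.symm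

/-- positive homogeneity of projection onto a cone -/
lemma aux_hom {C : Set F} (hC : Convex ℝ C)
    (hcone : ∀ x ∈ C, ∀ t : ℝ, 0 < t → t • x ∈ C) {P : F → F}
    (hP : ∀ x, P x ∈ C ∧ ∀ w ∈ C, ‖x - P x‖ ≤ ‖x - w‖) (t : ℝ) (ht : 0 < t) (x : F) :
    P (t • x) = t • P x := by
  refine aux_uniq hC hP (t • x) (t • P x) (hcone _ (hP x).1 t ht) ?_
  intro w hw
  have hw' : t⁻¹ • w ∈ C := hcone _ hw _ (by positivity)
  have e1 : t • x - t • P x = t • (x - P x) := by rw [smul_sub]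
  have e2 : w - t • P x = t • (t⁻¹ • w - P x) := by
    rw [smul_sub, smul_smul, mul_inv_cancel₀ ht.ne', one_smul]
  rw [e1, e2, real_inner_smul_left, real_inner_smul_right]
  have h := aux_var_ineq hC hP x _ hw'
  nlinarith [mul_nonpos_of_nonneg_of_nonpos (mul_pos ht ht).le h]

end Aux

theorem stmt19 (A B : Set (EuclideanSpace ℝ (Fin 2)))
    (hAclosed : IsClosed A) (hAconv : Convex ℝ A)
    (hBclosed : IsClosed B) (hBconv : Convex ℝ B)
    (hAcone : ∀ x ∈ A, ∀ t : ℝ, 0 < t → t • x ∈ A)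
    (hBcone : ∀ x ∈ B, ∀ t : ℝ, 0 < t → t • x ∈ B)
    (PA PB T : EuclideanSpace ℝ (Fin 2) → EuclideanSpace ℝ (Fin 2))
    (hPA : ∀ x, PA x ∈ A ∧ ∀ w ∈ A, ‖x - PA x‖ ≤ ‖x - w‖)
    (hPB : ∀ x, PB x ∈ B ∧ ∀ w ∈ B, ‖x - PB x‖ ≤ ‖x - w‖)
    (hT : ∀ x, T x = (1 / 2 : ℝ) •
      (x + ((2 : ℝ) • PB ((2 : ℝ) • PA x - x) - ((2 : ℝ) • PA x - x))))
    (hfix : {x | T x = x} = {0}) :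
    ∀ n : ℕ, ∀ x₀, T x₀ ≠ 0 → T (T^[n] x₀) ≠ T^[n] x₀ := by
  set rA : EuclideanSpace ℝ (Fin 2) → EuclideanSpace ℝ (Fin 2) :=
    fun x => (2 : ℝ) • PA x - x with hrA
  set N : EuclideanSpace ℝ (Fin 2) → EuclideanSpace ℝ (Fin 2) :=
    fun x => (2 : ℝ) • PB (rA x) - rA x with hN
  have hTN : ∀ x, T x = (1 / 2 : ℝ) • (x + N x) := hT
  -- reflection nonexpansiveness
  have hreflA : ∀ x y : EuclideanSpace ℝ (Fin 2), ‖rA x - rA y‖ ^ 2 ≤ ‖x - y‖ ^ 2 := by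
    intro x y
    have hf := aux_firm hAconv hPA x y
    have e : rA x - rA y = (2 : ℝ) • (PA x - PA y) - (x - y) := by
      simp only [hrA]; module
    rw [e, norm_sub_sq_real, norm_smul, real_inner_smul_left]
    have : ‖(2:ℝ)‖ = 2 := by norm_num
    rw [this]
    nlinarith
  have hreflN : ∀ x y : EuclideanSpace ℝ (Fin 2), ‖N x - N y‖ ^ 2 ≤ ‖x - y‖ ^ 2 := by
    intro x y
    have hf := aux_firm hBconv hPB (rA x) (rA y)
    have e : N x - N y = (2 : ℝ) • (PB (rA x) - PB (rA y)) - (rA x - rA y) := by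
      simp only [hN]; module
    have h1 : ‖N x - N y‖ ^ 2 ≤ ‖rA x - rA y‖ ^ 2 := by
      rw [e, norm_sub_sq_real, norm_smul, real_inner_smul_left]
      have : ‖(2:ℝ)‖ = 2 := by norm_num
      rw [this]
      nlinarith
    linarith [hreflA x y]
  -- firm nonexpansiveness of T
  have hTfirm : ∀ x y : EuclideanSpace ℝ (Fin 2), ‖T x - T y‖ ^ 2 ≤ ⟪T x - T y, x - y⟫ := by
    intro x y
    have e : T x - T y = (1/2 : ℝ) • ((x - y) + (N x - N y)) := by
      rw [hTN, hTN]; module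
    rw [e, norm_smul, real_inner_smul_left, inner_add_left,
      real_inner_self_eq_norm_sq, real_inner_comm]
    have h2 : ‖(x - y) + (N x - N y)‖ ^ 2
        = ‖x - y‖ ^ 2 + 2 * ⟪x - y, N x - N y⟫ + ‖N x - N y‖ ^ 2 :=
      norm_add_sq_real _ _
    have h3 : ‖(1/2:ℝ)‖ = 1/2 := by norm_num
    rw [h3, mul_pow, h2]
    nlinarith [hreflN x y]
  -- positive homogeneity of T
  have hThom : ∀ t : ℝ, 0 < t → ∀ x : EuclideanSpace ℝ (Fin 2), T (t • x) = t • T x := by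
    intro t ht x
    have hA' : PA (t • x) = t • PA x := aux_hom hAconv hAcone hPA t ht x
    have e : rA (t • x) = t • rA x := by simp only [hrA, hA']; module
    have hB' : PB (rA (t • x)) = t • PB (rA x) := by rw [e]; exact aux_hom hBconv hBcone hPB t ht _
    rw [hTN, hTN]
    simp only [hN]
    rw [hB', e]
    module
  -- fixed points
  have hfix' : ∀ y : EuclideanSpace ℝ (Fin 2), T y = y ↔ y = 0 := by
    intro y
    constructor
    · intro h; have := (Set.ext_iff.mp hfix y).mp h; simpa using this
    · rintro rfl; exact (Set.ext_iff.mp hfix 0).mpr rfl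
  have hT0 : T 0 = 0 := (hfix' 0).mpr rfl
  -- key lemma: range ∩ kernel = {0}
  have hkey : ∀ z : EuclideanSpace ℝ (Fin 2), T (T z) = 0 → T z = 0 := by
    intro z hz
    by_contra hy
    have hn : ‖T z‖ ≠ 0 := norm_ne_zero_iff.mpr hy
    have hr : (0:ℝ) < ‖T z‖ ^ 2 := by positivity
    have hd : (0:ℝ) < |⟪T z, z⟫| + ‖T z‖ ^ 2 := by positivity
    have htpos : 0 < ‖T z‖ ^ 2 / (|⟪T z, z⟫| + ‖T z‖ ^ 2) := div_pos hr hd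
    generalize hteq : ‖T z‖ ^ 2 / (|⟪T z, z⟫| + ‖T z‖ ^ 2) = t at htpos
    have hteq' : t * (|⟪T z, z⟫| + ‖T z‖ ^ 2) = ‖T z‖ ^ 2 := by
      rw [← hteq]; field_simp
    have h1 := hTfirm (t • z) (T z)
    rw [hThom t htpos z, hz, sub_zero, real_inner_smul_left, inner_sub_right,
      real_inner_smul_right, real_inner_self_eq_norm_sq, norm_smul,
      Real.norm_eq_abs, abs_of_pos htpos, mul_pow] at h1
    nlinarith [mul_le_mul_of_nonneg_left (le_abs_self (⟪T z, z⟫:ℝ))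
        (mul_pos htpos htpos).le,
      mul_pos (mul_pos htpos htpos) hr, hteq', mul_pos htpos hr]
  -- iterates never hit zero
  intro n x₀ hx0
  have hx0' : x₀ ≠ 0 := by rintro rfl; exact hx0 hT0
  have hchain : ∀ m : ℕ, T^[m] (T x₀) ≠ 0 := by
    intro m
    induction m with
    | zero => simpa using hx0
    | succ m ih =>
      rw [Function.iterate_succ_apply']
      intro h
      have e : T^[m] (T x₀) = T (T^[m] x₀) := by
        rw [← Function.iterate_succ_apply, Function.iterate_succ_apply']
      rw [e] at h ih
      exact ih (hkey _ h)
  have hiter : T^[n] x₀ ≠ 0 := by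
    cases n with
    | zero => simpa using hx0'
    | succ n => rw [Function.iterate_succ_apply]; exact hchain n
  intro h
  exact hiter ((hfix' _).mp h)
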